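/- The only two subsets of {0,1}^n of cardinality 2^{n-1} with minimum pairwise Hamming distance at least two are the set of even-weight vectors and the set of odd-weight vectors. -/

import Mathlib

namespace HalfCode
variable {n : ℕ}

def flip (i : Fin n) (x : Fin n → Bool) : Fin n → Bool := fun k => if k = i then !x k else x k

@[simp] lemma flip_flip (i : Fin n) (x : Fin n → Bool) : flip i (flip i x) = x := by
  funext k; simp only [flip]; split <;> simp

lemma flip_comm (i j : Fin n) (x : Fin n → Bool) :
    flip i (flip j x) = flip j (flip i x) := by
  funext k; simp only [flip]; split <;> split <;> simp

lemma flip_inj (i : Fin n) : Function.Injective (flip i) :=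
  Function.Involutive.injective (flip_flip i)

lemma dist_flip (i : Fin n) (x : Fin n → Bool) : hammingDist x (flip i x) = 1 := by
  unfold hammingDist
  have : ({k | x k ≠ flip i x k} : Finset (Fin n)) = {i} := by
    ext k
    simp only [flip, Finset.mem_filter, Finset.mem_univ, true_and, Finset.mem_singleton]
    by_cases h : k = i <;> simp [h]
  rw [this, Finset.card_singleton]

lemma flip_ne (i : Fin n) (x : Fin n → Bool) : flip i x ≠ x := by
  intro h
  have := congrFun h i
  simp [flip] at this

noncomputable def wt (x : Fin n → Bool) : ℕ := (Finset.univ.filter (fun i => x i = true)).card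

lemma wt_flip (i : Fin n) (x : Fin n → Bool) : Even (wt (flip i x)) ↔ ¬ Even (wt x) := by
  by_cases h : x i = true
  · have hset : (Finset.univ.filter (fun k => flip i x k = true))
        = (Finset.univ.filter (fun k => x k = true)).erase i := by
      ext k
      simp only [Finset.mem_filter, Finset.mem_univ, true_and, Finset.mem_erase, flip]
      by_cases hk : k = i <;> simp [hk, h]
    have hi : i ∈ Finset.univ.filter (fun k => x k = true) := by simp [h]
    have hpos : 1 ≤ wt x := Finset.card_pos.mpr ⟨i, hi⟩
    have hw : wt (flip i x) = wt x - 1 := by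
      unfold wt; rw [hset, Finset.card_erase_of_mem hi]
    rw [hw, Nat.even_sub hpos]
    simp
  · have hset : (Finset.univ.filter (fun k => flip i x k = true))
        = insert i (Finset.univ.filter (fun k => x k = true)) := by
      ext k
      simp only [Finset.mem_filter, Finset.mem_univ, true_and, Finset.mem_insert, flip]
      by_cases hk : k = i <;> simp [hk, h]
    have hi : i ∉ Finset.univ.filter (fun k => x k = true) := by simp [h]
    have hw : wt (flip i x) = wt x + 1 := by
      unfold wt; rw [hset, Finset.card_insert_of_notMem hi]
    rw [hw, Nat.even_add_one]


lemma flip_not_mem {C : Finset (Fin n → Bool)}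
    (hdist : ∀ x ∈ C, ∀ y ∈ C, x ≠ y → 2 ≤ hammingDist x y)
    {x : Fin n → Bool} (hx : x ∈ C) (i : Fin n) : flip i x ∉ C := by
  intro hmem
  have h2 := hdist x hx (flip i x) hmem (Ne.symm (flip_ne i x))
  rw [dist_flip] at h2
  omega

lemma flip_mem_of_not_mem (hn : 1 ≤ n) {C : Finset (Fin n → Bool)}
    (hcard : C.card = 2 ^ (n - 1))
    (hdist : ∀ x ∈ C, ∀ y ∈ C, x ≠ y → 2 ≤ hammingDist x y)
    {y : Fin n → Bool} (hy : y ∉ C) (i : Fin n) : flip i y ∈ C := by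
  set D := C.image (flip i) with hD
  have hdisj : Disjoint C D := by
    rw [Finset.disjoint_right]
    intro z hz hzC
    rw [hD, Finset.mem_image] at hz
    obtain ⟨c, hc, rfl⟩ := hz
    exact flip_not_mem hdist hc i hzC
  have hcd : D.card = C.card := Finset.card_image_of_injective _ (flip_inj i)
  have hunion : (C ∪ D).card = Fintype.card (Fin n → Bool) := by
    rw [Finset.card_union_of_disjoint hdisj, hcd, hcard]
    simp only [Fintype.card_fun, Fintype.card_bool, Fintype.card_fin]
    conv_rhs => rw [← Nat.sub_add_cancel hn]
    rw [pow_succ]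
    ring
  have huniv : C ∪ D = Finset.univ := Finset.eq_univ_of_card _ hunion
  have : y ∈ C ∪ D := huniv ▸ Finset.mem_univ y
  rcases Finset.mem_union.mp this with h | h
  · exact absurd h hy
  · rw [hD, Finset.mem_image] at h
    obtain ⟨c, hc, hcy⟩ := h
    have : flip i y = c := by rw [← hcy, flip_flip]
    rwa [this]

lemma step (hn : 1 ≤ n) {C : Finset (Fin n → Bool)}
    (hcard : C.card = 2 ^ (n - 1))
    (hdist : ∀ x ∈ C, ∀ y ∈ C, x ≠ y → 2 ≤ hammingDist x y)
    {x : Fin n → Bool} (hx : x ∈ C) (i j : Fin n) : flip i (flip j x) ∈ C :=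
  flip_mem_of_not_mem hn hcard hdist (flip_not_mem hdist hx j) i

lemma same_parity (hn : 1 ≤ n) {C : Finset (Fin n → Bool)}
    (hcard : C.card = 2 ^ (n - 1))
    (hdist : ∀ x ∈ C, ∀ y ∈ C, x ≠ y → 2 ≤ hammingDist x y) :
    ∀ d (x y : Fin n → Bool), x ∈ C → y ∈ C → hammingDist x y = d →
      (Even (wt x) ↔ Even (wt y)) := by
  intro d
  induction d using Nat.strong_induction_on with
  | _ d ih =>
    intro x y hx hy hd
    match d, hd with
    | 0, hd => rw [hammingDist_eq_zero.mp hd]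
    | 1, hd =>
      exfalso
      have hne : x ≠ y := by
        intro h; rw [h, hammingDist_self] at hd; omega
      have := hdist x hx y hy hne
      omega
    | (d + 2), hd =>
      set D := ({k | x k ≠ y k} : Finset (Fin n)) with hDdef
      have hDcard : D.card = d + 2 := hd
      obtain ⟨i, hi, j, hj, hij⟩ := Finset.one_lt_card.mp (by omega : 1 < D.card)
      set x' := flip i (flip j x) with hx'
      have hx'C : x' ∈ C := step hn hcard hdist hx i j
      have hx'val : ∀ k, x' k = if k = i then !x k else if k = j then !x k else x k := by
        intro k
        simp only [hx', flip]
        by_cases hki : k = i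
        · subst hki
          simp [hij]
        · simp [hki]
      have hset : ({k | x' k ≠ y k} : Finset (Fin n)) = (D.erase i).erase j := by
        ext k
        simp only [Finset.mem_filter, Finset.mem_univ, true_and, Finset.mem_erase, hDdef]
        rw [hx'val k]
        by_cases hki : k = i
        · subst hki
          simp only [if_pos rfl]
          have : x k ≠ y k := by simpa [hDdef] using hi
          constructor
          · intro h; exact absurd (by revert this h; cases x k <;> cases y k <;> simp) h
          · rintro ⟨-, h, -⟩; exact absurd rfl h
        · by_cases hkj : k = j
          · subst hkj
            simp only [if_neg hki, if_pos rfl]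
            have : x k ≠ y k := by simpa [hDdef] using hj
            constructor
            · intro h; exact absurd (by revert this h; cases x k <;> cases y k <;> simp) h
            · rintro ⟨h, -⟩; exact absurd rfl h
          · simp [hki, hkj]
      have hd' : hammingDist x' y = d := by
        show ({k | x' k ≠ y k} : Finset (Fin n)).card = d
        have hjmem : j ∈ D.erase i := Finset.mem_erase.mpr ⟨fun h => hij h.symm, hj⟩
        rw [hset, Finset.card_erase_of_mem hjmem, Finset.card_erase_of_mem hi, hDcard]
        omega
      have h1 := ih d (by omega) x' y hx'C hy hd'
      have h2 : Even (wt x') ↔ Even (wt x) := by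
        rw [hx', wt_flip, wt_flip]
        tauto
      rw [← h2, h1]

lemma card_even_set (hn : 1 ≤ n) :
    (Finset.univ.filter (fun x : Fin n → Bool => Even (wt x))).card = 2 ^ (n - 1) := by
  set E := Finset.univ.filter (fun x : Fin n → Bool => Even (wt x)) with hE
  set O := Finset.univ.filter (fun x : Fin n → Bool => ¬ Even (wt x)) with hO
  have i0 : Fin n := ⟨0, hn⟩
  have hEO : E.card ≤ O.card := by
    apply Finset.card_le_card_of_injOn (flip i0)
    · intro x hx
      simp only [hE, hO, Finset.mem_coe, Finset.mem_filter, Finset.mem_univ, true_and] at *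
      rw [wt_flip]; tauto
    · exact fun a _ b _ h => flip_inj i0 h
  have hOE : O.card ≤ E.card := by
    apply Finset.card_le_card_of_injOn (flip i0)
    · intro x hx
      simp only [hE, hO, Finset.mem_coe, Finset.mem_filter, Finset.mem_univ, true_and] at *
      rw [wt_flip]; tauto
    · exact fun a _ b _ h => flip_inj i0 h
  have hsum : E.card + O.card = 2 ^ n := by
    rw [hE, hO, Finset.card_filter_add_card_filter_not]
    simp [Fintype.card_fun]
  have h2 : (2:ℕ) ^ n = 2 * 2 ^ (n - 1) := by
    conv_lhs => rw [← Nat.sub_add_cancel hn]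
    rw [pow_succ]; ring
  omega

end HalfCode

open HalfCode

/-- The only two subsets of `{0,1}^n` of cardinality `2^(n-1)` with minimum pairwise
Hamming distance at least two are the even-weight vectors and the odd-weight vectors. -/
theorem half_card_distance_two_codes_are_parity_sets
    (n : ℕ) (hn : 1 ≤ n) (C : Finset (Fin n → Bool))
    (hcard : C.card = 2 ^ (n - 1))
    (hdist : ∀ x ∈ C, ∀ y ∈ C, x ≠ y → 2 ≤ hammingDist x y) :
    C = Finset.univ.filter (fun x : Fin n → Bool =>
        Even (Finset.univ.filter (fun i => x i = true)).card) ∨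
    C = Finset.univ.filter (fun x : Fin n → Bool =>
        Odd (Finset.univ.filter (fun i => x i = true)).card) := by
  have hCne : C.Nonempty := Finset.card_pos.mp (by rw [hcard]; positivity)
  obtain ⟨x0, hx0⟩ := hCne
  have hpar : ∀ x ∈ C, (Even (wt x) ↔ Even (wt x0)) := fun x hx =>
    same_parity hn hcard hdist (hammingDist x x0) x x0 hx hx0 rfl
  by_cases h0 : Even (wt x0)
  · left
    apply Finset.eq_of_subset_of_card_le
    · intro x hx
      simp only [Finset.mem_filter, Finset.mem_univ, true_and]
      exact ((hpar x hx).mpr h0 : Even (wt x))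
    · have : (Finset.univ.filter (fun x : Fin n → Bool => Even (wt x))).card = 2 ^ (n-1) :=
        card_even_set hn
      rw [hcard]
      calc (Finset.univ.filter (fun x : Fin n → Bool =>
              Even (Finset.univ.filter (fun i => x i = true)).card)).card
          = 2 ^ (n-1) := this
        _ ≤ 2 ^ (n-1) := le_refl _
  · right
    apply Finset.eq_of_subset_of_card_le
    · intro x hx
      simp only [Finset.mem_filter, Finset.mem_univ, true_and]
      have : ¬ Even (wt x) := fun h => h0 ((hpar x hx).mp h)
      exact (Nat.not_even_iff_odd.mp this : Odd (wt x))
    · have hE := card_even_set (n := n) hn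
      have hsplit : (Finset.univ.filter (fun x : Fin n → Bool => Even (wt x))).card
          + (Finset.univ.filter (fun x : Fin n → Bool => ¬ Even (wt x))).card
          = 2 ^ n := by
        rw [Finset.card_filter_add_card_filter_not]
        simp [Fintype.card_fun]
      have h2 : (2:ℕ) ^ n = 2 * 2 ^ (n - 1) := by
        conv_lhs => rw [← Nat.sub_add_cancel hn]
        rw [pow_succ]; ring
      have hOcard : (Finset.univ.filter (fun x : Fin n → Bool => ¬ Even (wt x))).card
          = 2 ^ (n-1) := by omega
      have hOO : (Finset.univ.filter (fun x : Fin n → Bool =>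
          Odd (Finset.univ.filter (fun i => x i = true)).card))
          = (Finset.univ.filter (fun x : Fin n → Bool => ¬ Even (wt x))) := by
        apply Finset.filter_congr
        intro x _
        simp [wt, Nat.not_even_iff_odd]
      rw [hcard, hOO, hOcard]
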